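/- Fix n, k, and suppose (v,w) ∈ S_n × S_n are connected by a path in QB(S_n) from w to v whose edge labels form a subsequence of the reverse lex (−ϖ_k)-chain, with v ≠ w. Then the degree d = (d_1,...,d_{n-1}) recording the total coroot contribution of the quantum edges of this path (i.e., down(w,A) = Σ d_i α_i^∨) is given by: d_i = #{ j ≤ i : v(j) < w(j) } for 1 ≤ i ≤ k, and d_i = #{ j > i : v(j) > w(j) } for k ≤ i ≤ n-1. -/

import Mathlib

open scoped Classical

noncomputable section

/-- The length (number of inversions) of a permutation in `S_n`. -/
def lenA {n : ℕ} (w : Equiv.Perm (Fin n)) : ℕ :=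
  (Finset.univ.filter (fun p : Fin n × Fin n => p.1 < p.2 ∧ w p.2 < w p.1)).card

/-- Bruhat edge `w → w·(i,j)` of the type `A_{n-1}` quantum Bruhat graph:
`ℓ(w·(i,j)) = ℓ(w) + 1`. -/
def bEdgeA {n : ℕ} (w : Equiv.Perm (Fin n)) (i j : Fin n) : Prop :=
  i < j ∧ lenA (w * Equiv.swap i j) = lenA w + 1

/-- Quantum edge `w → w·(i,j)`: `ℓ(w·(i,j)) = ℓ(w) + 1 - 2(j - i)`. -/
def qEdgeA {n : ℕ} (w : Equiv.Perm (Fin n)) (i j : Fin n) : Prop :=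
  i < j ∧ lenA (w * Equiv.swap i j) + 2 * ((j : ℕ) - (i : ℕ)) = lenA w + 1

/-- Edge of the quantum Bruhat graph `QB(S_n)` labeled by the transposition `(i,j)`. -/
def edgeA {n : ℕ} (w : Equiv.Perm (Fin n)) (i j : Fin n) : Prop :=
  bEdgeA w i j ∨ qEdgeA w i j

/-- `a ≺ b ≺ c` in the circular order on `{1,…,n}` starting at `a`. -/
def circB {n : ℕ} (a b c : Fin n) : Prop := b ≠ a ∧ b - a < c - a

/-- `a ≺ʳ b ≺ʳ c` in the reverse circular order on `{1,…,n}` starting at `a`. -/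
def circBR {n : ℕ} (a b c : Fin n) : Prop := b ≠ a ∧ a - b < a - c

/-- `EPathA w L v`: `L` is the list of labels of a directed path from `w` to `v` in
the quantum Bruhat graph `QB(S_n)`. -/
def EPathA {n : ℕ} : Equiv.Perm (Fin n) → List (Fin n × Fin n) → Equiv.Perm (Fin n) → Prop
  | w, [], v => w = v
  | w, p :: L, v => edgeA w p.1 p.2 ∧ EPathA (w * Equiv.swap p.1 p.2) L v

/-- The labels of the quantum edges occurring along a path. -/
def qLabels {n : ℕ} : Equiv.Perm (Fin n) → List (Fin n × Fin n) → List (Fin n × Fin n)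
  | _, [] => []
  | w, p :: L =>
      (if qEdgeA w p.1 p.2 then [p] else []) ++ qLabels (w * Equiv.swap p.1 p.2) L

/-- The order in which labels occur in the (reverse lex) `(-ϖ_k)`-chain
`(1,n), …, (1,k+1), (2,n), …, (2,k+1), …, (k,n), …, (k,k+1)`:
first index ascending, second descending. -/
def revChainOrd {n : ℕ} (p q : Fin n × Fin n) : Prop :=
  p.1 < q.1 ∨ (p.1 = q.1 ∧ q.2 < p.2)

/-- The coefficient `d_i` of the simple coroot `α_i^∨` (1-indexed `i`) in the degree
`down(w,A)` of a path: the number of quantum edges whose label `(a,b)` (1-indexed)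
satisfies `a ≤ i < b`. -/
def degCoeff {n : ℕ} (w : Equiv.Perm (Fin n)) (L : List (Fin n × Fin n)) (i : ℕ) : ℕ :=
  ((qLabels w L).filter
    (fun p : Fin n × Fin n => decide ((p.1 : ℕ) < i ∧ i ≤ (p.2 : ℕ)))).length

namespace St17

variable {n : ℕ}

lemma fin_lt_val {a b : Fin n} : a < b ↔ (a:ℕ) < b := Iff.rfl

lemma swap_lt_iff {i j p q : Fin n} (hij : i < j) (hpq : p < q) :
    Equiv.swap i j q < Equiv.swap i j p ↔
      (p = i ∧ q = j) ∨ (p = i ∧ q < j) ∨ (q = j ∧ i < p) := by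
  by_cases hpi : p = i
  · subst hpi
    by_cases hqj : q = j
    · subst hqj
      simp only [Equiv.swap_apply_left, Equiv.swap_apply_right]
      tauto
    · have hqi : q ≠ p := (ne_of_gt hpq)
      have : Equiv.swap p j q = q := Equiv.swap_apply_of_ne_of_ne hqi hqj
      rw [this, Equiv.swap_apply_left]
      constructor
      · intro h; exact Or.inr (Or.inl ⟨rfl, h⟩)
      · rintro (⟨-, h⟩ | ⟨-, h⟩ | ⟨h, -⟩)
        · exact absurd h hqj
        · exact h
        · exact absurd h hqj
  · by_cases hqj : q = j
    · subst hqj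
      have hpj : p ≠ q := ne_of_lt hpq
      rw [Equiv.swap_apply_right, Equiv.swap_apply_of_ne_of_ne hpi hpj]
      constructor
      · intro h; exact Or.inr (Or.inr ⟨rfl, h⟩)
      · rintro (⟨h, -⟩ | ⟨h, -⟩ | ⟨-, h⟩)
        · exact absurd h hpi
        · exact absurd h hpi
        · exact h
    · -- p ≠ i, q ≠ j
      have main : ¬ Equiv.swap i j q < Equiv.swap i j p := by
        by_cases hpj : p = j
        · subst hpj
          have hqi : q ≠ i := fun h => by
            subst h; exact absurd (lt_trans hij hpq) (lt_irrefl _)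
          rw [Equiv.swap_apply_right, Equiv.swap_apply_of_ne_of_ne hqi hqj]
          exact not_lt.2 (le_of_lt (lt_trans hij hpq))
        · by_cases hqi : q = i
          · subst hqi
            rw [Equiv.swap_apply_left, Equiv.swap_apply_of_ne_of_ne hpi hpj]
            exact not_lt.2 (le_of_lt (lt_trans hpq hij))
          · rw [Equiv.swap_apply_of_ne_of_ne hqi hqj,
              Equiv.swap_apply_of_ne_of_ne hpi hpj]
            exact not_lt.2 (le_of_lt hpq)
      constructor
      · intro h; exact absurd h main
      · rintro (⟨h, -⟩ | ⟨h, -⟩ | ⟨h, -⟩)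
        · exact absurd h hpi
        · exact absurd h hpi
        · exact absurd h hqj

open Finset
variable {n : ℕ}

lemma lenA_mul_swap (w : Equiv.Perm (Fin n)) {i j : Fin n} (hij : i < j) (hw : w i < w j) :
    lenA (w * Equiv.swap i j) =
      lenA w + 1 + 2 * ((Finset.Ioo i j).filter (fun c => w i < w c ∧ w c < w j)).card := by
  classical
  set t := Equiv.swap i j with ht
  have htt : ∀ x : Fin n, t (t x) = x := fun x => Equiv.swap_apply_self i j x
  set S' : Finset (Fin n × Fin n) :=
    Finset.univ.filter (fun p : Fin n × Fin n => t p.1 < t p.2 ∧ w p.2 < w p.1) with hS'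
  set S : Finset (Fin n × Fin n) :=
    Finset.univ.filter (fun p : Fin n × Fin n => p.1 < p.2 ∧ w p.2 < w p.1) with hS
  have step1 : lenA (w * t) = S'.card := by
    apply Finset.card_equiv (Equiv.prodCongr t t)
    intro p
    simp only [hS', Finset.mem_filter, Finset.mem_univ, true_and, Equiv.prodCongr_apply,
      Prod.map_fst, Prod.map_snd, htt, Equiv.Perm.mul_apply]
    exact Finset.mem_filter.trans (and_iff_right (Finset.mem_univ _))
  have hlen : lenA w = S.card := rfl
  set A : Finset (Fin n) := (Finset.Ioo i j).filter (fun c => w i < w c ∧ w c < w j) with hA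
  set C1 : Finset (Fin n) := (Finset.Ioo i j).filter (fun c => w c < w i) with hC1
  set C2 : Finset (Fin n) := (Finset.Ioo i j).filter (fun c => w j < w c) with hC2
  set D1 : Finset (Fin n) := (Finset.Ioo i j).filter (fun c => w i < w c) with hD1
  set D2 : Finset (Fin n) := (Finset.Ioo i j).filter (fun c => w c < w j) with hD2
  have hwinj : ∀ {a b : Fin n}, w a = w b → a = b := fun h => w.injective h
  -- description of S \ S'
  have sdiff1 : S \ S' = (C1.image (fun c => ((i, c) : Fin n × Fin n))) ∪
      (C2.image (fun c => ((c, j) : Fin n × Fin n))) := by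
    ext p
    simp only [Finset.mem_sdiff, hS, hS', Finset.mem_filter, Finset.mem_univ, true_and,
      Finset.mem_union, Finset.mem_image, hC1, hC2, Finset.mem_Ioo]
    constructor
    · rintro ⟨⟨hplt, hwlt⟩, hnot⟩
      have htlt : t p.2 < t p.1 := by
        rcases lt_trichotomy (t p.1) (t p.2) with h | h | h
        · exact absurd ⟨h, hwlt⟩ hnot
        · exact absurd (t.injective h) (ne_of_lt hplt)
        · exact h
      rcases (swap_lt_iff hij hplt).1 htlt with ⟨h1, h2⟩ | ⟨h1, h2⟩ | ⟨h1, h2⟩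
      · subst h1; subst h2; exact absurd hw (not_lt.2 (le_of_lt hwlt))
      · subst h1
        exact Or.inl ⟨p.2, ⟨⟨hplt, h2⟩, hwlt⟩, rfl⟩
      · subst h1
        exact Or.inr ⟨p.1, ⟨⟨h2, hplt⟩, hwlt⟩, rfl⟩
    · rintro (⟨c, ⟨⟨h1, h2⟩, h3⟩, rfl⟩ | ⟨c, ⟨⟨h1, h2⟩, h3⟩, rfl⟩)
      · refine ⟨⟨h1, h3⟩, ?_⟩
        rintro ⟨hlt, -⟩
        rw [Equiv.swap_apply_left] at hlt
        have : t c = c := Equiv.swap_apply_of_ne_of_ne (ne_of_gt h1) (ne_of_lt h2)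
        rw [this] at hlt
        exact absurd h2 (not_lt.2 (le_of_lt hlt))
      · refine ⟨⟨h2, h3⟩, ?_⟩
        rintro ⟨hlt, -⟩
        rw [Equiv.swap_apply_right] at hlt
        have : t c = c := Equiv.swap_apply_of_ne_of_ne (ne_of_gt h1) (ne_of_lt h2)
        rw [this] at hlt
        exact absurd h1 (not_lt.2 (le_of_lt hlt))
  -- description of S' \ S
  have sdiff2 : S' \ S = insert ((j, i) : Fin n × Fin n)
      ((D1.image (fun c => ((c, i) : Fin n × Fin n))) ∪
       (D2.image (fun c => ((j, c) : Fin n × Fin n)))) := by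
    ext p
    simp only [Finset.mem_sdiff, hS, hS', Finset.mem_filter, Finset.mem_univ, true_and,
      Finset.mem_insert, Finset.mem_union, Finset.mem_image, hD1, hD2, Finset.mem_Ioo]
    constructor
    · rintro ⟨⟨htlt, hwlt⟩, hnot⟩
      have hplt : p.2 < p.1 := by
        rcases lt_trichotomy p.1 p.2 with h | h | h
        · exact absurd ⟨h, hwlt⟩ hnot
        · exact absurd (congrArg t h) (ne_of_lt htlt)
        · exact h
      rcases (swap_lt_iff hij hplt).1 htlt with ⟨h1, h2⟩ | ⟨h1, h2⟩ | ⟨h1, h2⟩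
      · left; rw [Prod.ext_iff]; exact ⟨h2, h1⟩
      · right; left
        exact ⟨p.1, ⟨⟨h1 ▸ hplt, h2⟩, h1 ▸ hwlt⟩, by rw [← h1]⟩
      · right; right
        exact ⟨p.2, ⟨⟨h2, h1 ▸ hplt⟩, h1 ▸ hwlt⟩, by rw [← h1]⟩
    · rintro (hp | ⟨c, ⟨⟨h1, h2⟩, h3⟩, rfl⟩ | ⟨c, ⟨⟨h1, h2⟩, h3⟩, rfl⟩)
      · rw [hp]
        refine ⟨⟨?_, hw⟩, ?_⟩
        · simp only [Equiv.swap_apply_left, Equiv.swap_apply_right, t]; exact hij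
        · rintro ⟨hlt, -⟩; exact absurd hij (not_lt.2 (le_of_lt hlt))
      · have hct : t c = c := Equiv.swap_apply_of_ne_of_ne (ne_of_gt h1) (ne_of_lt h2)
        refine ⟨⟨?_, h3⟩, ?_⟩
        · show t c < t i; rw [hct, Equiv.swap_apply_left]; exact h2
        · rintro ⟨hlt, -⟩; exact absurd h1 (not_lt.2 (le_of_lt hlt))
      · have hct : t c = c := Equiv.swap_apply_of_ne_of_ne (ne_of_gt h1) (ne_of_lt h2)
        refine ⟨⟨?_, h3⟩, ?_⟩
        · show t j < t c; rw [hct, Equiv.swap_apply_right]; exact h1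
        · rintro ⟨hlt, -⟩; exact absurd h2 (not_lt.2 (le_of_lt hlt))
  -- cardinalities
  have hinj1 : Function.Injective (fun c : Fin n => ((i, c) : Fin n × Fin n)) :=
    fun a b h => by simpa using congrArg Prod.snd h
  have hinj2 : Function.Injective (fun c : Fin n => ((c, j) : Fin n × Fin n)) :=
    fun a b h => by simpa using congrArg Prod.fst h
  have hinj3 : Function.Injective (fun c : Fin n => ((c, i) : Fin n × Fin n)) :=
    fun a b h => by simpa using congrArg Prod.fst h
  have hinj4 : Function.Injective (fun c : Fin n => ((j, c) : Fin n × Fin n)) :=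
    fun a b h => by simpa using congrArg Prod.snd h
  have hcard1 : (S \ S').card = C1.card + C2.card := by
    rw [sdiff1, Finset.card_union_of_disjoint, Finset.card_image_of_injective _ hinj1,
      Finset.card_image_of_injective _ hinj2]
    rw [Finset.disjoint_left]
    rintro p hp hq
    obtain ⟨c, hc, rfl⟩ := Finset.mem_image.1 hp
    obtain ⟨c', hc', heq⟩ := Finset.mem_image.1 hq
    have h1 : c' = i := congrArg Prod.fst heq
    rw [hC1] at *
    have := (Finset.mem_filter.1 hc').1
    rw [Finset.mem_Ioo, h1] at this
    exact absurd this.1 (lt_irrefl i)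
  have hnotmem : ((j, i) : Fin n × Fin n) ∉
      (D1.image (fun c => ((c, i) : Fin n × Fin n))) ∪
      (D2.image (fun c => ((j, c) : Fin n × Fin n))) := by
    rw [Finset.mem_union]
    rintro (hm | hm)
    · obtain ⟨c, hc, heq⟩ := Finset.mem_image.1 hm
      have h1 : c = j := congrArg Prod.fst heq
      have := (Finset.mem_filter.1 hc).1
      rw [Finset.mem_Ioo, h1] at this
      exact absurd this.2 (lt_irrefl j)
    · obtain ⟨c, hc, heq⟩ := Finset.mem_image.1 hm
      have h1 : c = i := congrArg Prod.snd heq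
      have := (Finset.mem_filter.1 hc).1
      rw [Finset.mem_Ioo, h1] at this
      exact absurd this.1 (lt_irrefl i)
  have hcard2 : (S' \ S).card = 1 + (D1.card + D2.card) := by
    rw [sdiff2, Finset.card_insert_of_notMem hnotmem, Finset.card_union_of_disjoint,
      Finset.card_image_of_injective _ hinj3, Finset.card_image_of_injective _ hinj4]
    · omega
    · rw [Finset.disjoint_left]
      rintro p hp hq
      obtain ⟨c, hc, rfl⟩ := Finset.mem_image.1 hp
      obtain ⟨c', hc', heq⟩ := Finset.mem_image.1 hq
      have h1 : c = j := (congrArg Prod.fst heq).symm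
      have := (Finset.mem_filter.1 hc).1
      rw [Finset.mem_Ioo, h1] at this
      exact absurd this.2 (lt_irrefl j)
  have hD1card : D1.card = A.card + C2.card := by
    have hunion : D1 = A ∪ C2 := by
      ext c
      simp only [hD1, hA, hC2, Finset.mem_filter, Finset.mem_union, Finset.mem_Ioo]
      constructor
      · rintro ⟨⟨h1, h2⟩, h3⟩
        rcases lt_trichotomy (w c) (w j) with h | h | h
        · exact Or.inl ⟨⟨h1, h2⟩, h3, h⟩
        · exact absurd (hwinj h) (ne_of_lt h2)
        · exact Or.inr ⟨⟨h1, h2⟩, h⟩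
      · rintro (⟨h1, h2, -⟩ | ⟨h1, h2⟩)
        · exact ⟨h1, h2⟩
        · exact ⟨h1, lt_trans hw h2⟩
    rw [hunion, Finset.card_union_of_disjoint]
    rw [Finset.disjoint_left]
    rintro c hc hc'
    have h1 := (Finset.mem_filter.1 hc).2.2
    have h2 := (Finset.mem_filter.1 hc').2
    exact absurd (lt_trans h1 h2) (lt_irrefl (w c))
  have hD2card : D2.card = A.card + C1.card := by
    have hunion : D2 = A ∪ C1 := by
      ext c
      simp only [hD2, hA, hC1, Finset.mem_filter, Finset.mem_union, Finset.mem_Ioo]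
      constructor
      · rintro ⟨⟨h1, h2⟩, h3⟩
        rcases lt_trichotomy (w c) (w i) with h | h | h
        · exact Or.inr ⟨⟨h1, h2⟩, h⟩
        · exact absurd (hwinj h) (ne_of_gt h1)
        · exact Or.inl ⟨⟨h1, h2⟩, h, h3⟩
      · rintro (⟨h1, -, h2⟩ | ⟨h1, h2⟩)
        · exact ⟨h1, h2⟩
        · exact ⟨h1, lt_trans h2 hw⟩
    rw [hunion, Finset.card_union_of_disjoint]
    rw [Finset.disjoint_left]
    rintro c hc hc'
    have h1 := (Finset.mem_filter.1 hc).2.1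
    have h2 := (Finset.mem_filter.1 hc').2
    exact absurd (lt_trans h1 h2) (lt_irrefl (w i))
  have hsum1 : (S' \ S).card + (S' ∩ S).card = S'.card := Finset.card_sdiff_add_card_inter _ _
  have hsum2 : (S \ S').card + (S ∩ S').card = S.card := Finset.card_sdiff_add_card_inter _ _
  have hint : (S' ∩ S).card = (S ∩ S').card := by rw [Finset.inter_comm]
  rw [step1, hlen]
  omega


variable {n : ℕ}

lemma lenA_mul_swap' (w : Equiv.Perm (Fin n)) {i j : Fin n} (hij : i < j) (hw : w j < w i) :
    lenA w = lenA (w * Equiv.swap i j) + 1 +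
      2 * ((Finset.Ioo i j).filter (fun c => w j < w c ∧ w c < w i)).card := by
  have hw' : (w * Equiv.swap i j) i < (w * Equiv.swap i j) j := by
    simp only [Equiv.Perm.mul_apply, Equiv.swap_apply_left, Equiv.swap_apply_right]
    exact hw
  have h := lenA_mul_swap (w * Equiv.swap i j) hij hw'
  have hww : w * Equiv.swap i j * Equiv.swap i j = w := by
    rw [mul_assoc, Equiv.swap_mul_self, mul_one]
  rw [hww] at h
  have hfilter : (Finset.Ioo i j).filter
      (fun c => (w * Equiv.swap i j) i < (w * Equiv.swap i j) c ∧
        (w * Equiv.swap i j) c < (w * Equiv.swap i j) j) =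
      (Finset.Ioo i j).filter (fun c => w j < w c ∧ w c < w i) := by
    apply Finset.filter_congr
    intro c hc
    rw [Finset.mem_Ioo] at hc
    have hc1 : c ≠ i := ne_of_gt hc.1
    have hc2 : c ≠ j := ne_of_lt hc.2
    simp only [Equiv.Perm.mul_apply, Equiv.swap_apply_left, Equiv.swap_apply_right,
      Equiv.swap_apply_of_ne_of_ne hc1 hc2]
  rw [hfilter] at h
  exact h

lemma wlt_trichotomy (w : Equiv.Perm (Fin n)) {i j : Fin n} (hij : i ≠ j) :
    w i < w j ∨ w j < w i := by
  rcases lt_trichotomy (w i) (w j) with h | h | h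
  · exact Or.inl h
  · exact absurd (w.injective h) hij
  · exact Or.inr h

lemma ioo_card (i j : Fin n) : (Finset.Ioo i j).card = (j : ℕ) - i - 1 := by
  exact Fin.card_Ioo i j

lemma bEdge_iff (w : Equiv.Perm (Fin n)) (i j : Fin n) :
    bEdgeA w i j ↔ i < j ∧ w i < w j ∧ ∀ c, i < c → c < j → w c < w i ∨ w j < w c := by
  constructor
  · rintro ⟨hij, heq⟩
    refine ⟨hij, ?_⟩
    rcases wlt_trichotomy w (ne_of_lt hij) with hw | hw
    · refine ⟨hw, ?_⟩
      have h := lenA_mul_swap w hij hw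
      have hzero : ((Finset.Ioo i j).filter (fun c => w i < w c ∧ w c < w j)).card = 0 := by
        omega
      rw [Finset.card_eq_zero] at hzero
      intro c hc1 hc2
      have hnm : ¬ (w i < w c ∧ w c < w j) := by
        intro hcon
        have hcm : c ∈ (Finset.Ioo i j).filter (fun c => w i < w c ∧ w c < w j) :=
          Finset.mem_filter.2 ⟨Finset.mem_Ioo.2 ⟨hc1, hc2⟩, hcon⟩
        rw [hzero] at hcm
        exact Finset.notMem_empty c hcm
      rcases wlt_trichotomy w (ne_of_gt hc1) with h1 | h1
      · exact Or.inl h1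
      · rcases wlt_trichotomy w (ne_of_lt hc2) with h2 | h2
        · exact absurd ⟨h1, h2⟩ hnm
        · exact Or.inr h2
    · exfalso
      have h := lenA_mul_swap' w hij hw
      omega
  · rintro ⟨hij, hw, hcov⟩
    refine ⟨hij, ?_⟩
    have h := lenA_mul_swap w hij hw
    have hzero : ((Finset.Ioo i j).filter (fun c => w i < w c ∧ w c < w j)).card = 0 := by
      rw [Finset.card_eq_zero, Finset.filter_eq_empty_iff]
      intro c hc
      rw [Finset.mem_Ioo] at hc
      rcases hcov c hc.1 hc.2 with h' | h'
      · rintro ⟨a, -⟩; exact absurd a (not_lt.2 (le_of_lt h'))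
      · rintro ⟨-, a⟩; exact absurd a (not_lt.2 (le_of_lt h'))
    omega

lemma qEdge_iff (w : Equiv.Perm (Fin n)) (i j : Fin n) :
    qEdgeA w i j ↔ i < j ∧ w j < w i ∧ ∀ c, i < c → c < j → w j < w c ∧ w c < w i := by
  have hcIoo := ioo_card i j
  constructor
  · rintro ⟨hij, heq⟩
    have hij' : (i : ℕ) < (j : ℕ) := hij
    refine ⟨hij, ?_⟩
    rcases wlt_trichotomy w (ne_of_lt hij) with hw | hw
    · exfalso
      have h := lenA_mul_swap w hij hw
      omega
    · refine ⟨hw, ?_⟩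
      have h := lenA_mul_swap' w hij hw
      set B := (Finset.Ioo i j).filter (fun c => w j < w c ∧ w c < w i) with hB
      have hBle : B.card ≤ (Finset.Ioo i j).card := Finset.card_filter_le _ _
      have hBeq : B.card = (Finset.Ioo i j).card := by omega
      have hfull : B = Finset.Ioo i j :=
        Finset.eq_of_subset_of_card_le (Finset.filter_subset _ _) (le_of_eq hBeq.symm)
      intro c hc1 hc2
      have hcm : c ∈ B := hfull ▸ (Finset.mem_Ioo.2 ⟨hc1, hc2⟩)
      exact (Finset.mem_filter.1 hcm).2
  · rintro ⟨hij, hw, hcov⟩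
    have hij' : (i : ℕ) < (j : ℕ) := hij
    refine ⟨hij, ?_⟩
    have h := lenA_mul_swap' w hij hw
    have hfull : (Finset.Ioo i j).filter (fun c => w j < w c ∧ w c < w i) = Finset.Ioo i j := by
      apply Finset.filter_true_of_mem
      intro c hc
      rw [Finset.mem_Ioo] at hc
      exact hcov c hc.1 hc.2
    rw [hfull, hcIoo] at h
    omega

variable {n : ℕ}


lemma msl (u : Equiv.Perm (Fin n)) (e1 e2 : Fin n) : (u * Equiv.swap e1 e2) e1 = u e2 := by
  simp [Equiv.Perm.mul_apply]
lemma msr (u : Equiv.Perm (Fin n)) (e1 e2 : Fin n) : (u * Equiv.swap e1 e2) e2 = u e1 := by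
  simp [Equiv.Perm.mul_apply]
lemma mso (u : Equiv.Perm (Fin n)) {e1 e2 c : Fin n} (h1 : c ≠ e1) (h2 : c ≠ e2) :
    (u * Equiv.swap e1 e2) c = u c := by
  simp [Equiv.Perm.mul_apply, Equiv.swap_apply_of_ne_of_ne h1 h2]

lemma vne {u : Equiv.Perm (Fin n)} {c d : Fin n} (h : c ≠ d) : u c ≠ u d :=
  fun hh => h (u.injective hh)

lemma fne {c d : Fin n} (h : (c:ℕ) ≠ (d:ℕ)) : c ≠ d := fun hh => h (by rw [hh])
lemma fext {c d : Fin n} (h : (c:ℕ) = (d:ℕ)) : c = d := Fin.ext h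
lemma flt {c d : Fin n} (h : (c:ℕ) < (d:ℕ)) : c < d := h
lemma fltv {c d : Fin n} (h : c < d) : (c:ℕ) < (d:ℕ) := h

structure Phi (w0 u : Equiv.Perm (Fin n)) (k : ℕ) (la : Fin n) (lb : ℕ) (S Qd : Set ℕ) : Prop where
  hlak : (la:ℕ) < k
  hklb : k ≤ lb
  hlbn : lb ≤ n
  p1 : ∀ b : Fin n, (b:ℕ) ∈ S → w0 b < u b
  p2 : ∀ b : Fin n, (b:ℕ) ∈ S → (b:ℕ) < lb → w0 b < u la ∧ u la < u b
  p3 : ∀ b : Fin n, (b:ℕ) ∈ S → ∀ c : Fin n, (la:ℕ) < (c:ℕ) → (c:ℕ) < k →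
        w0 b < w0 c ∧ w0 c < u b
  p4 : ∀ c : Fin n, (la:ℕ) < (c:ℕ) → (c:ℕ) < k → u c = w0 c
  p5 : ∀ b : Fin n, k ≤ (b:ℕ) → (b:ℕ) ∉ S → u b ≤ w0 b
  p6a : ∀ b : Fin n, k ≤ (b:ℕ) → (b:ℕ) ∉ S → u b < w0 b → (b:ℕ) < lb →
        u la < u b ∨ w0 b < u la
  p6b : ∀ b : Fin n, k ≤ (b:ℕ) → (b:ℕ) ∉ S → u b < w0 b →
        ∀ c : Fin n, (la:ℕ) < (c:ℕ) → (c:ℕ) < k → w0 c < u b ∨ w0 b < w0 c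
  p7 : (la:ℕ) ∈ Qd → u la < w0 la ∧
        ∀ c : Fin n, (la:ℕ) < (c:ℕ) → (c:ℕ) < lb → u la < u c ∧ u c < w0 la
  p8 : (la:ℕ) ∉ Qd → w0 la ≤ u la ∧
        ∀ c : Fin n, (la:ℕ) < (c:ℕ) → (c:ℕ) < lb → u c < w0 la ∨ u la < u c
  p9 : ∀ c : Fin n, (c:ℕ) < (la:ℕ) → ((c:ℕ) ∈ Qd → u c < w0 c) ∧ ((c:ℕ) ∉ Qd → w0 c ≤ u c)
  p10 : ∀ x ∈ Qd, x ≤ (la:ℕ)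
  p11 : ∀ x ∈ S, k ≤ x


variable {n : ℕ}

lemma step {k : ℕ} {w0 u : Equiv.Perm (Fin n)} {la : Fin n} {lb : ℕ} {S Qd : Set ℕ}
    (hΦ : Phi w0 u k la lb S Qd)
    {e1 e2 : Fin n} (he1 : (e1:ℕ) < k) (he2 : k ≤ (e2:ℕ))
    (hord : (la:ℕ) < (e1:ℕ) ∨ ((la:ℕ) = (e1:ℕ) ∧ (e2:ℕ) < lb))
    (hedge : edgeA u e1 e2) :
    (qEdgeA u e1 e2 → (e1:ℕ) ∉ Qd ∧ (e2:ℕ) ∉ S ∧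
      Phi w0 (u * Equiv.swap e1 e2) k e1 (e2:ℕ) (insert (e2:ℕ) S) (insert (e1:ℕ) Qd)) ∧
    (¬ qEdgeA u e1 e2 → Phi w0 (u * Equiv.swap e1 e2) k e1 (e2:ℕ) S Qd) := by
  have he12 : (e1:ℕ) < (e2:ℕ) := lt_of_lt_of_le he1 he2
  have hne12 : e1 ≠ e2 := fne (ne_of_lt he12)
  have hlae1 : (la:ℕ) ≤ (e1:ℕ) := by rcases hord with h | ⟨h, -⟩ <;> omega
  have hhead : ∀ b : Fin n, (b:ℕ) ∈ S → (b:ℕ) ≤ (e2:ℕ) → u e1 < u b ∧ w0 b < u e1 := by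
    intro b hbS hble
    rcases hord with hlt | ⟨heq, helb⟩
    · have he1v : u e1 = w0 e1 := hΦ.p4 e1 hlt he1
      have h3 := hΦ.p3 b hbS e1 hlt he1
      rw [he1v]
      exact ⟨h3.2, h3.1⟩
    · have hlae : la = e1 := fext heq
      have h2 := hΦ.p2 b hbS (lt_of_le_of_lt hble helb)
      rw [hlae] at h2
      exact ⟨h2.2, h2.1⟩
  have hlowhead : ∀ b : Fin n, k ≤ (b:ℕ) → (b:ℕ) ∉ S → u b < w0 b → (b:ℕ) ≤ (e2:ℕ) →
      u e1 < u b ∨ w0 b < u e1 := by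
    intro b hkb hbS hlow hble
    rcases hord with hlt | ⟨heq, helb⟩
    · have he1v : u e1 = w0 e1 := hΦ.p4 e1 hlt he1
      have h6 := hΦ.p6b b hkb hbS hlow e1 hlt he1
      rw [he1v]
      rcases h6 with h | h
      · exact Or.inl h
      · exact Or.inr h
    · have hlae : la = e1 := fext heq
      have h6 := hΦ.p6a b hkb hbS hlow (lt_of_le_of_lt hble helb)
      rw [hlae] at h6
      exact h6
  have hp4' : ∀ c : Fin n, (e1:ℕ) < (c:ℕ) → (c:ℕ) < k → u c = w0 c := by
    intro c h1 h2
    exact hΦ.p4 c (lt_of_le_of_lt hlae1 h1) h2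
  have huother : ∀ c : Fin n, (c:ℕ) ≠ (e1:ℕ) → (c:ℕ) ≠ (e2:ℕ) →
      (u * Equiv.swap e1 e2) c = u c := fun c h1 h2 => mso u (fne h1) (fne h2)
  constructor
  · -- quantum case
    intro hq
    obtain ⟨hee, hvlt, hsand⟩ := (qEdge_iff u e1 e2).1 hq
    have qa : ∀ b : Fin n, (b:ℕ) ∈ S → (e2:ℕ) < (b:ℕ) := by
      intro b hbS
      by_contra hle
      push_neg at hle
      have hh := hhead b hbS hle
      rcases eq_or_lt_of_le hle with heq | hlt
      · have : b = e2 := fext heq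
        rw [this] at hh
        exact absurd hvlt (not_lt.2 (le_of_lt hh.1))
      · have hkb := hΦ.p11 _ hbS
        have hs := hsand b (flt (lt_of_lt_of_le he1 hkb)) (flt hlt)
        exact absurd hs.2 (not_lt.2 (le_of_lt hh.1))
    have he2S : (e2:ℕ) ∉ S := fun h => absurd (qa e2 h) (lt_irrefl _)
    have he1Qd : (e1:ℕ) ∉ Qd := by
      intro hmem
      rcases hord with hlt | ⟨heq, helb⟩
      · exact absurd (hΦ.p10 _ hmem) (not_le.2 hlt)
      · have hlae : la = e1 := fext heq
        have h7 := hΦ.p7 (by rw [hlae]; exact hmem)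
        have h72 := (h7.2 e2 (by rw [heq]; exact he12) helb).1
        rw [hlae] at h72
        exact absurd hvlt (not_lt.2 (le_of_lt h72))
    have hkey : w0 e2 < u e1 := by
      have h5 := hΦ.p5 e2 he2 he2S
      rcases eq_or_lt_of_le h5 with heq | hlow
      · rw [← heq]; exact hvlt
      · rcases hlowhead e2 he2 he2S hlow (le_refl _) with h | h
        · exact absurd hvlt (not_lt.2 (le_of_lt h))
        · exact h
    refine ⟨he1Qd, he2S, ?_⟩
    refine ⟨he1, he2, le_of_lt e2.isLt, ?_, ?_, ?_, ?_, ?_, ?_, ?_, ?_, ?_, ?_, ?_, ?_⟩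
    · -- p1
      intro b hbS
      rcases hbS with hbe2 | hbS
      · have hbeq : b = e2 := fext hbe2
        rw [hbeq, msr]
        exact hkey
      · have hgt := qa b hbS
        have hkb := hΦ.p11 _ hbS
        rw [huother b (by omega) (by omega)]
        exact hΦ.p1 b hbS
    · -- p2
      intro b hbS hblt
      rcases hbS with hbe2 | hbS
      · omega
      · exact absurd hblt (not_lt.2 (le_of_lt (qa b hbS)))
    · -- p3
      intro b hbS c hc1 hc2
      have hcne1 : (c:ℕ) ≠ (e1:ℕ) := by omega
      have hcne2 : (c:ℕ) ≠ (e2:ℕ) := by omega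
      have hcv : u c = w0 c := hp4' c hc1 hc2
      have hce2 : c < e2 := flt (by omega)
      have hce1 : e1 < c := flt hc1
      have hs := hsand c hce1 hce2
      rcases hbS with hbe2 | hbS
      · have hbeq : b = e2 := fext hbe2
        rw [hbeq, msr]
        constructor
        · -- w0 e2 < w0 c
          have h5 := hΦ.p5 e2 he2 he2S
          rcases eq_or_lt_of_le h5 with heq | hlow
          · rw [← heq]; rw [← hcv]; exact hs.1
          · rcases hΦ.p6b e2 he2 he2S hlow c (lt_of_le_of_lt hlae1 hc1) hc2 with h | h
            · rw [← hcv] at h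
              exact absurd hs.1 (not_lt.2 (le_of_lt h))
            · exact h
        · rw [← hcv]; exact hs.2
      · have hgt := qa b hbS
        have hkb := hΦ.p11 _ hbS
        rw [huother b (by omega) (by omega)]
        exact hΦ.p3 b hbS c (lt_of_le_of_lt hlae1 hc1) hc2
    · -- p4
      intro c hc1 hc2
      rw [huother c (by omega) (by omega)]
      exact hp4' c hc1 hc2
    · -- p5
      intro b hkb hbS
      have hbne2 : (b:ℕ) ≠ (e2:ℕ) := fun h => hbS (Or.inl h)
      have hbnS : (b:ℕ) ∉ S := fun h => hbS (Or.inr h)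
      rw [huother b (by omega) hbne2]
      exact hΦ.p5 b hkb hbnS
    · -- p6a
      intro b hkb hbS hlow hblt
      have hbne2 : (b:ℕ) ≠ (e2:ℕ) := fun h => hbS (Or.inl h)
      have hbnS : (b:ℕ) ∉ S := fun h => hbS (Or.inr h)
      rw [huother b (by omega) hbne2] at hlow ⊢
      rw [msl]
      have hs := hsand b (flt (by omega)) (flt (by omega))
      exact Or.inl hs.1
    · -- p6b
      intro b hkb hbS hlow c hc1 hc2
      have hbne2 : (b:ℕ) ≠ (e2:ℕ) := fun h => hbS (Or.inl h)
      have hbnS : (b:ℕ) ∉ S := fun h => hbS (Or.inr h)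
      rw [huother b (by omega) hbne2] at hlow ⊢
      exact hΦ.p6b b hkb hbnS hlow c (lt_of_le_of_lt hlae1 hc1) hc2
    · -- p7
      intro _
      constructor
      · rw [msl]
        rcases hord with hlt | ⟨heq, helb⟩
        · have he1v : u e1 = w0 e1 := hΦ.p4 e1 hlt he1
          rw [← he1v]
          exact hvlt
        · have hlae : la = e1 := fext heq
          have h8 := hΦ.p8 (by rw [hlae]; exact he1Qd)
          rcases (h8.2 e2 (by rw [heq]; exact he12) helb) with h | h
          · rw [hlae] at h; exact h
          · rw [hlae] at h
            exact absurd hvlt (not_lt.2 (le_of_lt h))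
      · intro c hc1 hc2
        have hce1 : e1 < c := flt hc1
        have hce2 : c < e2 := flt hc2
        have hs := hsand c hce1 hce2
        rw [msl, huother c (by omega) (by omega)]
        refine ⟨hs.1, ?_⟩
        rcases hord with hlt | ⟨heq, helb⟩
        · have he1v : u e1 = w0 e1 := hΦ.p4 e1 hlt he1
          rw [← he1v]
          exact hs.2
        · have hlae : la = e1 := fext heq
          have h8 := hΦ.p8 (by rw [hlae]; exact he1Qd)
          rcases (h8.2 c (by omega) (by omega)) with h | h
          · rw [hlae] at h; exact h
          · rw [hlae] at h
            exact absurd hs.2 (not_lt.2 (le_of_lt h))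
    · -- p8
      intro h
      exact absurd (Set.mem_insert _ _) h
    · -- p9
      intro c hc
      have hcne1 : (c:ℕ) ≠ (e1:ℕ) := by omega
      have hcne2 : (c:ℕ) ≠ (e2:ℕ) := by omega
      rw [huother c hcne1 hcne2]
      have hmemiff : ((c:ℕ) ∈ insert (e1:ℕ) Qd) ↔ (c:ℕ) ∈ Qd := by
        constructor
        · rintro (h | h)
          · omega
          · exact h
        · exact fun h => Or.inr h
      rcases lt_trichotomy ((c:ℕ)) ((la:ℕ)) with hlt | heq | hgt
      · have h9 := hΦ.p9 c hlt
        exact ⟨fun hm => h9.1 (hmemiff.1 hm), fun hm => h9.2 (fun hmm => hm (hmemiff.2 hmm))⟩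
      · have hcla : c = la := fext heq
        subst hcla
        constructor
        · intro hm
          exact (hΦ.p7 (hmemiff.1 hm)).1
        · intro hm
          exact (hΦ.p8 (fun hmm => hm (hmemiff.2 hmm))).1
      · have hcv : u c = w0 c := hΦ.p4 c hgt (lt_of_lt_of_le hc (le_of_lt he1))
        constructor
        · intro hm
          exact absurd (hΦ.p10 _ (hmemiff.1 hm)) (by omega)
        · intro _
          exact le_of_eq hcv.symm
    · -- p10
      rintro x (hx | hx)
      · omega
      · exact le_trans (hΦ.p10 x hx) hlae1
    · -- p11
      rintro x (hx | hx)
      · omega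
      · exact hΦ.p11 x hx
  · -- Bruhat case
    intro hnq
    have hb : bEdgeA u e1 e2 := by
      rcases hedge with hb | hq
      · exact hb
      · exact absurd hq hnq
    obtain ⟨hee, hvlt, hcov⟩ := (bEdge_iff u e1 e2).1 hb
    refine ⟨he1, he2, le_of_lt e2.isLt, ?_, ?_, ?_, ?_, ?_, ?_, ?_, ?_, ?_, ?_, ?_, ?_⟩
    · -- p1
      intro b hbS
      have hkb := hΦ.p11 _ hbS
      by_cases hbe2 : (b:ℕ) = (e2:ℕ)
      · have hbeq : b = e2 := fext hbe2
        have hhh := (hhead b hbS (le_of_eq hbe2)).2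
        rw [hbeq] at hhh
        rw [hbeq, msr]
        exact hhh
      · rw [huother b (by omega) hbe2]
        exact hΦ.p1 b hbS
    · -- p2
      intro b hbS hblt
      have hkb := hΦ.p11 _ hbS
      have hh := hhead b hbS (le_of_lt hblt)
      rw [msl, huother b (by omega) (by omega)]
      constructor
      · exact lt_trans hh.2 hvlt
      · rcases hcov b (flt (by omega)) (flt hblt) with h | h
        · exact absurd hh.1 (not_lt.2 (le_of_lt h))
        · exact h
    · -- p3
      intro b hbS c hc1 hc2
      have hcv : u c = w0 c := hp4' c hc1 hc2
      have h3 := hΦ.p3 b hbS c (lt_of_le_of_lt hlae1 hc1) hc2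
      have hkb := hΦ.p11 _ hbS
      refine ⟨h3.1, ?_⟩
      by_cases hbe2 : (b:ℕ) = (e2:ℕ)
      · have hbeq : b = e2 := fext hbe2
        have h32 := h3.2
        rw [hbeq] at h32
        rw [hbeq, msr]
        rcases hcov c (flt hc1) (flt (lt_of_lt_of_le hc2 he2)) with h | h
        · rw [hcv] at h; exact h
        · rw [hcv] at h
          exact absurd h32 (not_lt.2 (le_of_lt h))
      · rw [huother b (by omega) hbe2]
        exact h3.2
    · -- p4
      intro c hc1 hc2
      rw [huother c (by omega) (by omega)]
      exact hp4' c hc1 hc2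
    · -- p5
      intro b hkb hbS
      by_cases hbe2 : (b:ℕ) = (e2:ℕ)
      · have hbeq : b = e2 := fext hbe2
        have hbS2 : (e2:ℕ) ∉ S := by rw [← hbe2]; exact hbS
        rw [hbeq, msr]
        exact le_of_lt (lt_of_lt_of_le hvlt (hΦ.p5 e2 he2 hbS2))
      · rw [huother b (by omega) hbe2]
        exact hΦ.p5 b hkb hbS
    · -- p6a
      intro b hkb hbS hlow hblt
      have hbne2 : (b:ℕ) ≠ (e2:ℕ) := by omega
      rw [huother b (by omega) hbne2] at hlow ⊢
      rw [msl]
      rcases hlowhead b hkb hbS hlow (le_of_lt hblt) with h | h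
      · rcases hcov b (flt (by omega)) (flt hblt) with h2 | h2
        · exact absurd h (not_lt.2 (le_of_lt h2))
        · exact Or.inl h2
      · exact Or.inr (lt_trans h hvlt)
    · -- p6b
      intro b hkb hbS hlow c hc1 hc2
      have hcv : u c = w0 c := hp4' c hc1 hc2
      by_cases hbe2 : (b:ℕ) = (e2:ℕ)
      · have hbeq : b = e2 := fext hbe2
        have hbS2 : (e2:ℕ) ∉ S := by rw [← hbe2]; exact hbS
        rw [hbeq, msr] at hlow ⊢
        rcases hcov c (flt hc1) (flt (lt_of_lt_of_le hc2 he2)) with h | h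
        · rw [hcv] at h
          exact Or.inl h
        · rcases eq_or_lt_of_le (hΦ.p5 e2 he2 hbS2) with heq | hlow2
          · rw [← heq]
            rw [hcv] at h
            exact Or.inr h
          · rcases hΦ.p6b e2 he2 hbS2 hlow2 c (lt_of_le_of_lt hlae1 hc1) hc2 with h2 | h2
            · rw [← hcv] at h2
              exact absurd h (not_lt.2 (le_of_lt h2))
            · exact Or.inr h2
      · rw [huother b (by omega) hbe2] at hlow ⊢
        exact hΦ.p6b b hkb hbS hlow c (lt_of_le_of_lt hlae1 hc1) hc2
    · -- p7
      intro hmem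
      have hlae : la = e1 := by
        rcases hord with hlt | ⟨heq, -⟩
        · exact absurd (hΦ.p10 _ hmem) (not_le.2 hlt)
        · exact fext heq
      have helb : (e2:ℕ) < lb := by
        rcases hord with hlt | ⟨-, h⟩
        · exact absurd (hΦ.p10 _ hmem) (not_le.2 hlt)
        · exact h
      have h7 := hΦ.p7 (by rw [hlae]; exact hmem)
      have h7la := h7.1
      have h7e2 := h7.2 e2 (by rw [hlae]; exact he12) helb
      rw [hlae] at h7la h7e2
      constructor
      · rw [msl]
        calc u e2 < w0 e1 := h7e2.2
          _ = w0 e1 := rfl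
      · intro c hc1 hc2
        have h7c := h7.2 c (by rw [hlae]; omega) (by omega)
        rw [hlae] at h7c
        rw [msl, huother c (by omega) (by omega)]
        constructor
        · rcases hcov c (flt hc1) (flt hc2) with h | h
          · exact absurd h7c.1 (not_lt.2 (le_of_lt h))
          · exact h
        · exact h7c.2
    · -- p8
      intro hmem
      constructor
      · rw [msl]
        rcases hord with hlt | ⟨heq, -⟩
        · have he1v : u e1 = w0 e1 := hΦ.p4 e1 hlt he1
          rw [← he1v]
          exact le_of_lt hvlt
        · have hlae : la = e1 := fext heq
          have h8 := hΦ.p8 (by rw [hlae]; exact hmem)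
          have := h8.1
          rw [hlae] at this
          exact le_of_lt (lt_of_le_of_lt this hvlt)
      · intro c hc1 hc2
        rw [msl, huother c (by omega) (by omega)]
        rcases hcov c (flt hc1) (flt hc2) with h | h
        · rcases hord with hlt | ⟨heq, helb⟩
          · have he1v : u e1 = w0 e1 := hΦ.p4 e1 hlt he1
            rw [← he1v]
            exact Or.inl h
          · have hlae : la = e1 := fext heq
            have h8 := hΦ.p8 (by rw [hlae]; exact hmem)
            rcases h8.2 c (by rw [heq]; omega) (by omega) with h2 | h2
            · rw [hlae] at h2
              exact Or.inl h2
            · rw [hlae] at h2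
              exact absurd h (not_lt.2 (le_of_lt h2))
        · exact Or.inr h
    · -- p9
      intro c hc
      have hcne1 : (c:ℕ) ≠ (e1:ℕ) := by omega
      have hcne2 : (c:ℕ) ≠ (e2:ℕ) := by omega
      rw [huother c hcne1 hcne2]
      rcases lt_trichotomy ((c:ℕ)) ((la:ℕ)) with hlt | heq | hgt
      · exact hΦ.p9 c hlt
      · have hcla : c = la := fext heq
        subst hcla
        exact ⟨fun hm => (hΦ.p7 hm).1, fun hm => (hΦ.p8 hm).1⟩
      · have hcv : u c = w0 c := hΦ.p4 c hgt (lt_of_lt_of_le hc (le_of_lt he1))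
        constructor
        · intro hm
          exact absurd (hΦ.p10 _ hm) (by omega)
        · intro _
          exact le_of_eq hcv.symm
    · -- p10
      intro x hx
      exact le_trans (hΦ.p10 x hx) hlae1
    · -- p11
      exact hΦ.p11


variable {n : ℕ}

lemma revChainOrd_trans : Transitive (@revChainOrd n) := by
  intro a b c hab hbc
  rcases hab with h | ⟨h1, h2⟩ <;> rcases hbc with g | ⟨g1, g2⟩
  · exact Or.inl (lt_trans h g)
  · exact Or.inl (g1 ▸ h)
  · exact Or.inl (h1 ▸ g)
  · exact Or.inr ⟨h1.trans g1, lt_trans g2 h2⟩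

lemma main {k : ℕ} (w0 : Equiv.Perm (Fin n)) :
    ∀ (L : List (Fin n × Fin n)) (u v : Equiv.Perm (Fin n)) (la : Fin n) (lb : ℕ)
      (S Qd : Set ℕ),
      Phi w0 u k la lb S Qd →
      (∀ p ∈ L, (p.1:ℕ) < k ∧ k ≤ (p.2:ℕ) ∧
        ((la:ℕ) < (p.1:ℕ) ∨ ((la:ℕ) = (p.1:ℕ) ∧ (p.2:ℕ) < lb))) →
      List.Chain' revChainOrd L →
      EPathA u L v →
      ((∀ a : Fin n, (a:ℕ) < k →
          ((qLabels u L).countP (fun p => decide (p.1 = a))) =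
            if (a:ℕ) ∈ Qd then 0 else if v a < w0 a then 1 else 0) ∧
       (∀ b : Fin n, k ≤ (b:ℕ) →
          ((qLabels u L).countP (fun p => decide (p.2 = b))) =
            if (b:ℕ) ∈ S then 0 else if w0 b < v b then 1 else 0) ∧
       (∀ a : Fin n, (a:ℕ) < k → (a:ℕ) ∈ Qd → v a < w0 a) ∧
       (∀ b : Fin n, k ≤ (b:ℕ) → (b:ℕ) ∈ S → w0 b < v b)) := by
  intro L
  induction L with
  | nil =>
    intro u v la lb S Qd hΦ _ _ hpath
    have huv : u = v := hpath
    subst huv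
    refine ⟨?_, ?_, ?_, ?_⟩
    · intro a hak
      show (List.countP _ []) = _
      rw [List.countP_nil]
      by_cases hmem : (a:ℕ) ∈ Qd
      · rw [if_pos hmem]
      · rw [if_neg hmem, if_neg]
        rcases lt_trichotomy ((a:ℕ)) ((la:ℕ)) with hlt | heq | hgt
        · exact not_lt.2 ((hΦ.p9 a hlt).2 hmem)
        · have : a = la := fext heq
          subst this
          exact not_lt.2 (hΦ.p8 hmem).1
        · exact not_lt.2 (le_of_eq (hΦ.p4 a hgt hak).symm)
    · intro b hbk
      show (List.countP _ []) = _
      rw [List.countP_nil]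
      by_cases hmem : (b:ℕ) ∈ S
      · rw [if_pos hmem]
      · rw [if_neg hmem, if_neg]
        exact not_lt.2 (hΦ.p5 b hbk hmem)
    · intro a hak hmem
      rcases lt_trichotomy ((a:ℕ)) ((la:ℕ)) with hlt | heq | hgt
      · exact (hΦ.p9 a hlt).1 hmem
      · have : a = la := fext heq
        subst this
        exact (hΦ.p7 hmem).1
      · exact absurd (hΦ.p10 _ hmem) (by omega)
    · intro b hbk hmem
      exact hΦ.p1 b hmem
  | cons p L' ih =>
    intro u v la lb S Qd hΦ hlab hchain hpath
    obtain ⟨hedge, hpath'⟩ := hpath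
    obtain ⟨hpk1, hpk2, hpord⟩ := hlab p List.mem_cons_self
    have hpair : ∀ q ∈ L', revChainOrd p q := by
      haveI : IsTrans (Fin n × Fin n) revChainOrd := ⟨fun a b c hab hbc => revChainOrd_trans hab hbc⟩
      have hpw := List.isChain_iff_pairwise.1 hchain
      exact (List.pairwise_cons.1 hpw).1
    have hchain' : List.Chain' revChainOrd L' := (List.isChain_cons.1 hchain).2
    have hlab' : ∀ q ∈ L', (q.1:ℕ) < k ∧ k ≤ (q.2:ℕ) ∧
        ((p.1:ℕ) < (q.1:ℕ) ∨ ((p.1:ℕ) = (q.1:ℕ) ∧ (q.2:ℕ) < (p.2:ℕ))) := by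
      intro q hq
      obtain ⟨h1, h2, -⟩ := hlab q (List.mem_cons_of_mem p hq)
      refine ⟨h1, h2, ?_⟩
      rcases hpair q hq with h | ⟨h, h'⟩
      · exact Or.inl h
      · exact Or.inr ⟨congrArg Fin.val h, h'⟩
    have hstep := step hΦ hpk1 hpk2 hpord hedge
    by_cases hq : qEdgeA u p.1 p.2
    · obtain ⟨he1Qd, he2S, hΦ'⟩ := hstep.1 hq
      obtain ⟨ih1, ih2, ih3, ih4⟩ :=
        ih (u * Equiv.swap p.1 p.2) v p.1 (p.2:ℕ) (insert ((p.2:ℕ)) S)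
          (insert ((p.1:ℕ)) Qd) hΦ' hlab' hchain' hpath'
      have hql : qLabels u (p :: L') = p :: qLabels (u * Equiv.swap p.1 p.2) L' := by
        show (if qEdgeA u p.1 p.2 then [p] else []) ++ _ = _
        rw [if_pos hq]
        rfl
      refine ⟨?_, ?_, ?_, ?_⟩
      · intro a hak
        rw [hql, List.countP_cons]
        have ha1 := ih1 a hak
        by_cases hap : p.1 = a
        · have hmemins : (a:ℕ) ∈ insert ((p.1:ℕ)) Qd := Or.inl (congrArg Fin.val hap.symm)
          rw [if_pos hmemins] at ha1
          have hmemQd : (a:ℕ) ∉ Qd := by rw [← hap]; exact he1Qd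
          have hva : v a < w0 a := ih3 a hak hmemins
          rw [ha1, if_neg hmemQd, if_pos hva]
          simp [hap]
        · have hval : (a:ℕ) ≠ (p.1:ℕ) := fun h => hap (fext h.symm)
          have hiff : ((a:ℕ) ∈ insert ((p.1:ℕ)) Qd) ↔ (a:ℕ) ∈ Qd := by
            constructor
            · rintro (h | h)
              · exact absurd h hval
              · exact h
            · exact fun h => Or.inr h
          have hz : (if (decide (p.1 = a) : Bool) then 1 else 0) = 0 := by simp [hap]
          rw [hz, ha1, Nat.add_zero]
          by_cases hm : (a:ℕ) ∈ Qd
          · rw [if_pos hm, if_pos (hiff.2 hm)]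
          · rw [if_neg hm, if_neg (fun hh => hm (hiff.1 hh))]
      · intro b hbk
        rw [hql, List.countP_cons]
        have hb1 := ih2 b hbk
        by_cases hbp : p.2 = b
        · have hmemins : (b:ℕ) ∈ insert ((p.2:ℕ)) S := Or.inl (congrArg Fin.val hbp.symm)
          rw [if_pos hmemins] at hb1
          have hmemS : (b:ℕ) ∉ S := by rw [← hbp]; exact he2S
          have hvb : w0 b < v b := ih4 b hbk hmemins
          rw [hb1, if_neg hmemS, if_pos hvb]
          simp [hbp]
        · have hval : (b:ℕ) ≠ (p.2:ℕ) := fun h => hbp (fext h.symm)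
          have hiff : ((b:ℕ) ∈ insert ((p.2:ℕ)) S) ↔ (b:ℕ) ∈ S := by
            constructor
            · rintro (h | h)
              · exact absurd h hval
              · exact h
            · exact fun h => Or.inr h
          have hz : (if (decide (p.2 = b) : Bool) then 1 else 0) = 0 := by simp [hbp]
          rw [hz, hb1, Nat.add_zero]
          by_cases hm : (b:ℕ) ∈ S
          · rw [if_pos hm, if_pos (hiff.2 hm)]
          · rw [if_neg hm, if_neg (fun hh => hm (hiff.1 hh))]
      · intro a hak hmem
        exact ih3 a hak (Or.inr hmem)
      · intro b hbk hmem
        exact ih4 b hbk (Or.inr hmem)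
    · have hΦ' := hstep.2 hq
      obtain ⟨ih1, ih2, ih3, ih4⟩ :=
        ih (u * Equiv.swap p.1 p.2) v p.1 (p.2:ℕ) S Qd hΦ' hlab' hchain' hpath'
      have hql : qLabels u (p :: L') = qLabels (u * Equiv.swap p.1 p.2) L' := by
        show (if qEdgeA u p.1 p.2 then [p] else []) ++ _ = _
        rw [if_neg hq]
        rfl
      rw [hql]
      exact ⟨ih1, ih2, ih3, ih4⟩


variable {n : ℕ}

lemma qLabels_subset : ∀ (L : List (Fin n × Fin n)) (u : Equiv.Perm (Fin n)) (p : Fin n × Fin n),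
    p ∈ qLabels u L → p ∈ L := by
  intro L
  induction L with
  | nil => intro u p h; exact absurd h ((List.not_mem_nil (a := p)))
  | cons q L' ih =>
    intro u p h
    have hdef : qLabels u (q :: L') =
        (if qEdgeA u q.1 q.2 then [q] else []) ++ qLabels (u * Equiv.swap q.1 q.2) L' := rfl
    rw [hdef, List.mem_append] at h
    rcases h with h | h
    · by_cases hq : qEdgeA u q.1 q.2
      · rw [if_pos hq] at h
        rw [List.mem_singleton] at h
        exact h ▸ (List.mem_cons_self (a := q) (l := L'))
      · rw [if_neg hq] at h
        exact absurd h ((List.not_mem_nil (a := p)))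
    · exact List.mem_cons_of_mem q (ih _ p h)

lemma countP_split_left {k i : ℕ} (hik : i ≤ k) :
    ∀ (M : List (Fin n × Fin n)), (∀ p ∈ M, (p.1:ℕ) < k ∧ k ≤ (p.2:ℕ)) →
      M.countP (fun p => decide ((p.1:ℕ) < i ∧ i ≤ (p.2:ℕ))) =
      ∑ a ∈ Finset.univ.filter (fun a : Fin n => (a:ℕ) < i),
        M.countP (fun p => decide (p.1 = a)) := by
  intro M
  induction M with
  | nil => intro _; simp
  | cons p M' ih =>
    intro hM
    obtain ⟨hp1, hp2⟩ := hM p List.mem_cons_self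
    have ihM := ih (fun q hq => hM q (List.mem_cons_of_mem p hq))
    rw [List.countP_cons]
    have hsum : ∀ a ∈ Finset.univ.filter (fun a : Fin n => (a:ℕ) < i), True := fun _ _ => trivial
    calc List.countP (fun p => decide ((p.1:ℕ) < i ∧ i ≤ (p.2:ℕ))) M' +
          (if (decide ((p.1:ℕ) < i ∧ i ≤ (p.2:ℕ)) : Bool) then 1 else 0)
        = (∑ a ∈ Finset.univ.filter (fun a : Fin n => (a:ℕ) < i),
            List.countP (fun q => decide (q.1 = a)) M') +
          (if (p.1:ℕ) < i then 1 else 0) := by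
          rw [ihM]
          congr 1
          by_cases hc : (p.1:ℕ) < i
          · rw [if_pos hc, if_pos]
            simp only [decide_eq_true_eq]
            exact ⟨hc, le_trans hik hp2⟩
          · rw [if_neg hc, if_neg]
            simp only [decide_eq_true_eq]
            rintro ⟨hcc, -⟩
            exact hc hcc
      _ = ∑ a ∈ Finset.univ.filter (fun a : Fin n => (a:ℕ) < i),
            (List.countP (fun q => decide (q.1 = a)) M' +
             (if (decide (p.1 = a) : Bool) then 1 else 0)) := by
          rw [Finset.sum_add_distrib]
          congr 1
          have : ∀ a : Fin n, (if (decide (p.1 = a) : Bool) then (1:ℕ) else 0) =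
              if p.1 = a then 1 else 0 := by intro a; simp
          rw [Finset.sum_congr rfl (fun a _ => this a)]
          rw [Finset.sum_ite_eq]
          by_cases hc : (p.1:ℕ) < i
          · simp [Finset.mem_filter, hc]
          · simp [Finset.mem_filter, hc]
      _ = _ := by
          rw [← Finset.sum_congr rfl (fun a _ => (List.countP_cons (p := fun q => decide (q.1 = a)) (a := p) (l := M')).symm)]

lemma countP_split_right {k i : ℕ} (hik : k ≤ i) :
    ∀ (M : List (Fin n × Fin n)), (∀ p ∈ M, (p.1:ℕ) < k ∧ k ≤ (p.2:ℕ)) →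
      M.countP (fun p => decide ((p.1:ℕ) < i ∧ i ≤ (p.2:ℕ))) =
      ∑ b ∈ Finset.univ.filter (fun b : Fin n => i ≤ (b:ℕ)),
        M.countP (fun p => decide (p.2 = b)) := by
  intro M
  induction M with
  | nil => intro _; simp
  | cons p M' ih =>
    intro hM
    obtain ⟨hp1, hp2⟩ := hM p List.mem_cons_self
    have ihM := ih (fun q hq => hM q (List.mem_cons_of_mem p hq))
    rw [List.countP_cons]
    calc List.countP (fun p => decide ((p.1:ℕ) < i ∧ i ≤ (p.2:ℕ))) M' +
          (if (decide ((p.1:ℕ) < i ∧ i ≤ (p.2:ℕ)) : Bool) then 1 else 0)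
        = (∑ b ∈ Finset.univ.filter (fun b : Fin n => i ≤ (b:ℕ)),
            List.countP (fun q => decide (q.2 = b)) M') +
          (if i ≤ (p.2:ℕ) then 1 else 0) := by
          rw [ihM]
          congr 1
          by_cases hc : i ≤ (p.2:ℕ)
          · rw [if_pos hc, if_pos]
            simp only [decide_eq_true_eq]
            exact ⟨lt_of_lt_of_le hp1 hik, hc⟩
          · rw [if_neg hc, if_neg]
            simp only [decide_eq_true_eq]
            rintro ⟨-, hcc⟩
            exact hc hcc
      _ = ∑ b ∈ Finset.univ.filter (fun b : Fin n => i ≤ (b:ℕ)),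
            (List.countP (fun q => decide (q.2 = b)) M' +
             (if (decide (p.2 = b) : Bool) then 1 else 0)) := by
          rw [Finset.sum_add_distrib]
          congr 1
          have : ∀ b : Fin n, (if (decide (p.2 = b) : Bool) then (1:ℕ) else 0) =
              if p.2 = b then 1 else 0 := by intro b; simp
          rw [Finset.sum_congr rfl (fun b _ => this b)]
          rw [Finset.sum_ite_eq]
          by_cases hc : i ≤ (p.2:ℕ)
          · simp [Finset.mem_filter, hc]
          · simp [Finset.mem_filter, hc]
      _ = _ := by
          rw [← Finset.sum_congr rfl (fun b _ => (List.countP_cons (p := fun q => decide (q.2 = b)) (a := p) (l := M')).symm)]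


end St17

/-- For a path in `QB(S_n)` from `w` to `v ≠ w` whose labels form a
subsequence of the reverse lex `(-ϖ_k)`-chain, the degree `d = (d_1, …, d_{n-1})` of
its quantum part is given by `d_i = #{j ≤ i : v(j) < w(j)}` for `1 ≤ i ≤ k` and
`d_i = #{j > i : v(j) > w(j)}` for `k ≤ i ≤ n-1` (all 1-indexed). -/
theorem stmt17 {n k : ℕ} (hk1 : 1 ≤ k) (hk2 : k ≤ n - 1)
    (w v : Equiv.Perm (Fin n)) (L : List (Fin n × Fin n))
    (hmid : ∀ p ∈ L, (p.1 : ℕ) < k ∧ k ≤ (p.2 : ℕ))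
    (hchain : List.Chain' revChainOrd L)
    (hpath : EPathA w L v)
    (hne : v ≠ w) :
    (∀ i : ℕ, 1 ≤ i → i ≤ k →
      degCoeff w L i =
        (Finset.univ.filter (fun j : Fin n => (j : ℕ) < i ∧ v j < w j)).card) ∧
    (∀ i : ℕ, k ≤ i → i ≤ n - 1 →
      degCoeff w L i =
        (Finset.univ.filter (fun j : Fin n => i ≤ (j : ℕ) ∧ w j < v j)).card) := by
  classical
  have hn0 : 0 < n := by
    rcases L with _ | ⟨p, L'⟩
    · exact absurd (hpath : w = v).symm hne
    · exact lt_of_le_of_lt (Nat.zero_le _) p.1.isLt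
  have hkn : k < n := by omega
  have hΦ0 : St17.Phi w w k (⟨0, hn0⟩ : Fin n) n (∅ : Set ℕ) (∅ : Set ℕ) := by
    refine ⟨hk1, le_of_lt hkn, le_refl n, ?_, ?_, ?_, ?_, ?_, ?_, ?_, ?_, ?_, ?_, ?_, ?_⟩
    · exact fun b hb => absurd hb (Set.notMem_empty _)
    · exact fun b hb => absurd hb (Set.notMem_empty _)
    · exact fun b hb => absurd hb (Set.notMem_empty _)
    · exact fun c _ _ => rfl
    · exact fun b _ _ => le_refl _
    · exact fun b _ _ hlow => absurd hlow (lt_irrefl _)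
    · exact fun b _ _ hlow => absurd hlow (lt_irrefl _)
    · exact fun h => absurd h (Set.notMem_empty _)
    · intro _
      refine ⟨le_refl _, fun c hc1 _ => ?_⟩
      have hcne : c ≠ (⟨0, hn0⟩ : Fin n) := fun h => by
        rw [h] at hc1; exact absurd hc1 (lt_irrefl _)
      exact St17.wlt_trichotomy w hcne
    · intro c hc
      exact absurd hc (by exact Nat.not_lt_zero _)
    · exact fun x hx => absurd hx (Set.notMem_empty _)
    · exact fun x hx => absurd hx (Set.notMem_empty _)
  have hlab : ∀ p ∈ L, (p.1:ℕ) < k ∧ k ≤ (p.2:ℕ) ∧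
      (((⟨0, hn0⟩ : Fin n):ℕ) < (p.1:ℕ) ∨
        (((⟨0, hn0⟩ : Fin n):ℕ) = (p.1:ℕ) ∧ (p.2:ℕ) < n)) := by
    intro p hp
    obtain ⟨h1, h2⟩ := hmid p hp
    refine ⟨h1, h2, ?_⟩
    rcases Nat.eq_zero_or_pos ((p.1:ℕ)) with h | h
    · exact Or.inr ⟨h.symm, p.2.isLt⟩
    · exact Or.inl h
  obtain ⟨h1, h2, h3, h4⟩ := St17.main w L w v ⟨0, hn0⟩ n ∅ ∅ hΦ0 hlab hchain hpath
  have hmid' : ∀ p ∈ qLabels w L, (p.1:ℕ) < k ∧ k ≤ (p.2:ℕ) :=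
    fun p hp => hmid p (St17.qLabels_subset L w p hp)
  constructor
  · intro i hi1 hik
    have hsplit := St17.countP_split_left hik (qLabels w L) hmid'
    have hdc : degCoeff w L i =
        (qLabels w L).countP (fun p => decide ((p.1:ℕ) < i ∧ i ≤ (p.2:ℕ))) :=
      List.countP_eq_length_filter.symm
    rw [hdc, hsplit]
    have hAC : ∀ a ∈ Finset.univ.filter (fun a : Fin n => (a:ℕ) < i),
        (qLabels w L).countP (fun p => decide (p.1 = a)) =
          if v a < w a then 1 else 0 := by
      intro a ha
      have hak : (a:ℕ) < k := lt_of_lt_of_le (Finset.mem_filter.1 ha).2 hik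
      have := h1 a hak
      rw [if_neg (Set.notMem_empty _)] at this
      exact this
    rw [Finset.sum_congr rfl hAC]
    rw [show Finset.univ.filter (fun j : Fin n => (j:ℕ) < i ∧ v j < w j) =
        (Finset.univ.filter (fun j : Fin n => (j:ℕ) < i)).filter (fun j => v j < w j) from
      (Finset.filter_filter _ _ _).symm]
    rw [Finset.card_filter]
  · intro i hik hin
    have hsplit := St17.countP_split_right hik (qLabels w L) hmid'
    have hdc : degCoeff w L i =
        (qLabels w L).countP (fun p => decide ((p.1:ℕ) < i ∧ i ≤ (p.2:ℕ))) :=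
      List.countP_eq_length_filter.symm
    rw [hdc, hsplit]
    have hBC : ∀ b ∈ Finset.univ.filter (fun b : Fin n => i ≤ (b:ℕ)),
        (qLabels w L).countP (fun p => decide (p.2 = b)) =
          if w b < v b then 1 else 0 := by
      intro b hb
      have hbk : k ≤ (b:ℕ) := le_trans hik (Finset.mem_filter.1 hb).2
      have := h2 b hbk
      rw [if_neg (Set.notMem_empty _)] at this
      exact this
    rw [Finset.sum_congr rfl hBC]
    rw [show Finset.univ.filter (fun j : Fin n => i ≤ (j:ℕ) ∧ w j < v j) =
        (Finset.univ.filter (fun j : Fin n => i ≤ (j:ℕ))).filter (fun j => w j < v j) from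
      (Finset.filter_filter _ _ _).symm]
    rw [Finset.card_filter]
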